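/- Let A be a Keigher differential ring with X = Spec^Δ A, and suppose f ∈ O(X) satisfies f(p) ∈ pA_p for every p ∈ X. Then f is nilpotent: there exists n ≥ 1 with f^n(p) = 0 in A_p for all p. -/
import Mathlib


/-- An ideal is a differential ideal w.r.t. a family of derivation maps `d`. -/
def IsDiffIdeal {A : Type*} [CommRing A] {k : ℕ} (d : Fin k → A → A) (I : Ideal A) : Prop :=
  ∀ i : Fin k, ∀ x ∈ I, d i x ∈ I

/-- The differential spectrum: prime differential ideals, with the Kolchin topology
(the subspace topology induced from the Zariski topology on `PrimeSpectrum`). -/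
abbrev DiffSpec {A : Type*} [CommRing A] {k : ℕ} (d : Fin k → A → A) :=
  {p : PrimeSpectrum A // IsDiffIdeal d p.asIdeal}

/-- A Keigher ring: the radical of every differential ideal is differential. -/
def IsKeigher {A : Type*} [CommRing A] {k : ℕ} (d : Fin k → A → A) : Prop :=
  ∀ I : Ideal A, IsDiffIdeal d I → IsDiffIdeal d I.radical

/-- `radDiffGen d E` is the smallest radical differential ideal containing `E`. -/
def radDiffGen {A : Type*} [CommRing A] {k : ℕ} (d : Fin k → A → A) (E : Set A) : Ideal A :=
  sInf {I : Ideal A | E ⊆ I ∧ I.IsRadical ∧ IsDiffIdeal d I}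

/-- A function `X → ⊔_p A_p` is regular if it is locally a quotient `a/b` with `b`
outside every prime differential ideal of the neighborhood. -/
def RegularLoc {A : Type*} [CommRing A] {k : ℕ} {d : Fin k → A → A}
    (f : ∀ p : DiffSpec d, Localization.AtPrime p.1.asIdeal) : Prop :=
  ∀ p : DiffSpec d, ∃ U : Set (DiffSpec d), IsOpen U ∧ p ∈ U ∧ ∃ a b : A,
    (∀ q ∈ U, b ∉ q.1.asIdeal) ∧
    ∀ q ∈ U, f q * algebraMap A (Localization.AtPrime q.1.asIdeal) b
      = algebraMap A (Localization.AtPrime q.1.asIdeal) a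

section aux

variable {A : Type*} [CommRing A] {k : ℕ} {d : Fin k → A → A}

lemma rdg_subset (E : Set A) : E ⊆ ↑(radDiffGen d E) := fun _ he =>
  Ideal.mem_sInf.2 fun _ hI => hI.1 he

lemma rdg_isRadical (E : Set A) : (radDiffGen d E).IsRadical := by
  intro r hr
  rw [Ideal.mem_radical_iff] at hr
  obtain ⟨n, hn⟩ := hr
  refine Ideal.mem_sInf.2 fun I hI => ?_
  exact hI.2.1 (Ideal.mem_radical_iff.2 ⟨n, Ideal.mem_sInf.1 hn hI⟩)

lemma rdg_isDiff (E : Set A) : IsDiffIdeal d (radDiffGen d E) := by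
  intro i x hx
  exact Ideal.mem_sInf.2 fun I hI => hI.2.2 i x (Ideal.mem_sInf.1 hx hI)

lemma rdg_le {E : Set A} {I : Ideal A} (hE : E ⊆ I) (hrad : I.IsRadical)
    (hdiff : IsDiffIdeal d I) : radDiffGen d E ≤ I :=
  sInf_le ⟨hE, hrad, hdiff⟩

lemma rdg_mono {E F : Set A} (h : E ⊆ F) : radDiffGen d E ≤ radDiffGen d F :=
  rdg_le (h.trans (rdg_subset F)) (rdg_isRadical F) (rdg_isDiff F)

variable (δ : Fin k → Derivation ℤ A A)

/-- Kaplansky mini-lemma: in a radical differential ideal, `a*b ∈ I` implies `a * δ b ∈ I`. -/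
lemma mul_deriv_mem {I : Ideal A} (hrad : I.IsRadical)
    (hdiff : IsDiffIdeal (fun i => ⇑(δ i)) I) {a b : A} (hab : a * b ∈ I) (i : Fin k) :
    a * δ i b ∈ I := by
  have h1 : a * δ i b + b * δ i a ∈ I := by
    have := hdiff i _ hab
    simpa [Derivation.leibniz, smul_eq_mul, mul_comm] using this
  have h2 : (a * δ i b) ^ 2 ∈ I := by
    have : (a * δ i b) * (a * δ i b + b * δ i a) - (a * b) * (δ i a * δ i b) ∈ I :=
      I.sub_mem (I.mul_mem_left _ h1) (I.mul_mem_right _ hab)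
    have e : (a * δ i b) * (a * δ i b + b * δ i a) - (a * b) * (δ i a * δ i b)
        = (a * δ i b) ^ 2 := by ring
    rwa [e] at this
  exact hrad (Ideal.mem_radical_iff.2 ⟨2, h2⟩)

/-- `x * radDiffGen E ⊆ radDiffGen (x • E)`. -/
lemma mul_rdg_mem (x : A) (E : Set A) {a : A}
    (ha : a ∈ radDiffGen (fun i => ⇑(δ i)) E) :
    x * a ∈ radDiffGen (fun i => ⇑(δ i)) ((x * ·) '' E) := by
  set D := fun i => ⇑(δ i)
  set K := radDiffGen D ((x * ·) '' E) with hK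
  let J : Ideal A :=
    { carrier := {a | x * a ∈ K}
      zero_mem' := by simp
      add_mem' := fun {u v} hu hv => by
        simp only [Set.mem_setOf_eq, mul_add] at *
        exact K.add_mem hu hv
      smul_mem' := fun c u hu => by
        simp only [Set.mem_setOf_eq, smul_eq_mul] at *
        have : x * (c * u) = c * (x * u) := by ring
        rw [this]
        exact K.mul_mem_left c hu }
  have hJ : radDiffGen D E ≤ J := by
    apply rdg_le
    · intro e he
      show x * e ∈ K
      exact rdg_subset _ ⟨e, he, rfl⟩
    · intro r hr
      rw [Ideal.mem_radical_iff] at hr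
      obtain ⟨n, hn⟩ := hr
      have hn' : x * r ^ n ∈ K := hn
      show x * r ∈ K
      match n, hn' with
      | 0, hn' => exact K.mul_mem_right r (by simpa using hn')
      | (m+1), hn' =>
        have e : (x * r) ^ (m + 1) = x ^ m * (x * r ^ (m + 1)) := by
          rw [mul_pow, pow_succ]; ring
        exact rdg_isRadical _ (Ideal.mem_radical_iff.2
          ⟨m + 1, by rw [e]; exact K.mul_mem_left _ hn'⟩)
    · intro i a ha
      show x * δ i a ∈ K
      exact mul_deriv_mem δ (rdg_isRadical _) (rdg_isDiff _) ha i
  exact hJ ha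

end aux

section aux2
variable {A : Type*} [CommRing A] {k : ℕ} (δ : Fin k → Derivation ℤ A A)

lemma rdg_mul_mem {E F : Set A} {s t : A} (hs : s ∈ radDiffGen (fun i => ⇑(δ i)) E)
    (ht : t ∈ radDiffGen (fun i => ⇑(δ i)) F) :
    s * t ∈ radDiffGen (fun i => ⇑(δ i)) (Set.image2 (· * ·) E F) := by
  have h1 : s * t ∈ radDiffGen (fun i => ⇑(δ i)) ((s * ·) '' F) := mul_rdg_mem δ s F ht
  have h2 : ((s * ·) '' F : Set A) ⊆ ↑(radDiffGen (fun i => ⇑(δ i)) (Set.image2 (· * ·) E F)) := by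
    rintro _ ⟨f, hf, rfl⟩
    have h3 : f * s ∈ radDiffGen (fun i => ⇑(δ i)) ((f * ·) '' E) := mul_rdg_mem δ f E hs
    have h4 : ((f * ·) '' E : Set A) ⊆ Set.image2 (· * ·) E F := by
      rintro _ ⟨e, he, rfl⟩
      exact ⟨e, he, f, hf, mul_comm e f⟩
    have h5 := rdg_mono h4 h3
    show s * f ∈ _
    rwa [mul_comm]
  exact rdg_le h2 (rdg_isRadical _) (rdg_isDiff _) h1

/-- If `I` is a radical differential ideal and no power of `x` lies in `I`, there is a
prime differential ideal containing `I` and avoiding `x`. -/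
lemma exists_diffPrime {I : Ideal A} (hrad : I.IsRadical) (hdiff : IsDiffIdeal (fun i => ⇑(δ i)) I)
    {x : A} (hx : ∀ n : ℕ, x ^ n ∉ I) :
    ∃ P : Ideal A, P.IsPrime ∧ IsDiffIdeal (fun i => ⇑(δ i)) P ∧ I ≤ P ∧ x ∉ P := by
  set S : Set (Ideal A) :=
    {J | J.IsRadical ∧ IsDiffIdeal (fun i => ⇑(δ i)) J ∧ ∀ n : ℕ, x ^ n ∉ J} with hS
  have hzorn : ∀ c ⊆ S, IsChain (· ≤ ·) c → ∀ y ∈ c, ∃ ub ∈ S, ∀ z ∈ c, z ≤ ub := by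
    intro c hc hchain J hJ
    refine ⟨sSup c, ⟨?_, ?_, ?_⟩, fun z hz => le_sSup hz⟩
    · intro r hr
      rw [Ideal.mem_radical_iff] at hr
      obtain ⟨n, hn⟩ := hr
      rw [Submodule.mem_sSup_of_directed ⟨J, hJ⟩ hchain.directedOn] at hn ⊢
      obtain ⟨K, hK, hnK⟩ := hn
      exact ⟨K, hK, (hc hK).1 (Ideal.mem_radical_iff.2 ⟨n, hnK⟩)⟩
    · intro i r hr
      rw [Submodule.mem_sSup_of_directed ⟨J, hJ⟩ hchain.directedOn] at hr ⊢
      obtain ⟨K, hK, hrK⟩ := hr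
      exact ⟨K, hK, (hc hK).2.1 i r hrK⟩
    · intro n hn
      rw [Submodule.mem_sSup_of_directed ⟨J, hJ⟩ hchain.directedOn] at hn
      obtain ⟨K, hK, hnK⟩ := hn
      exact (hc hK).2.2 n hnK
  obtain ⟨m, hIm, hmax⟩ := zorn_le_nonempty₀ S hzorn I ⟨hrad, hdiff, hx⟩
  obtain ⟨hmrad, hmdiff, hmx⟩ := hmax.prop
  refine ⟨m, ⟨?_, ?_⟩, hmdiff, hIm, by simpa using hmx 1⟩
  · intro hTop
    exact hmx 0 (by simp [hTop])
  · intro a b hab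
    by_contra hcon
    push_neg at hcon
    obtain ⟨ha, hb⟩ := hcon
    -- the enlarged ideals must meet powers of x
    have key : ∀ c : A, c ∉ m → ∃ n : ℕ, x ^ n ∈ radDiffGen (fun i => ⇑(δ i)) (↑m ∪ {c}) := by
      intro c hc
      by_contra hnone
      push_neg at hnone
      have hmem : radDiffGen (fun i => ⇑(δ i)) (↑m ∪ {c}) ∈ S :=
        ⟨rdg_isRadical _, rdg_isDiff _, hnone⟩
      have hle : m ≤ radDiffGen (fun i => ⇑(δ i)) (↑m ∪ {c}) := fun z hz =>
        rdg_subset _ (Or.inl hz)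
      have := hmax.2 hmem hle
      exact hc (this (rdg_subset _ (Or.inr rfl)))
    obtain ⟨na, hna⟩ := key a ha
    obtain ⟨nb, hnb⟩ := key b hb
    have hprod : x ^ na * x ^ nb ∈
        radDiffGen (fun i => ⇑(δ i)) (Set.image2 (· * ·) (↑m ∪ {a}) (↑m ∪ {b})) :=
      rdg_mul_mem δ hna hnb
    have hsub : Set.image2 (· * ·) ((↑m : Set A) ∪ {a}) (↑m ∪ {b}) ⊆ ↑m := by
      rintro _ ⟨u, hu, v, hv, rfl⟩
      rcases hu with hu | hu
      · exact m.mul_mem_right v hu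
      · rcases hv with hv | hv
        · simp only [Set.mem_singleton_iff] at hu
          rw [hu]; exact m.mul_mem_left a hv
        · simp only [Set.mem_singleton_iff] at hu hv
          rw [hu, hv]; exact hab
    have : x ^ na * x ^ nb ∈ m := rdg_le hsub hmrad hmdiff hprod
    rw [← pow_add] at this
    exact hmx _ this

/-- `radDiffGen` is finitary. -/
lemma rdg_finitary {E : Set A} {a : A} (ha : a ∈ radDiffGen (fun i => ⇑(δ i)) E) :
    ∃ F : Finset A, ↑F ⊆ E ∧ a ∈ radDiffGen (fun i => ⇑(δ i)) (↑F : Set A) := by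
  classical
  let J : Ideal A :=
    { carrier := {r | ∃ F : Finset A, ↑F ⊆ E ∧ r ∈ radDiffGen (fun i => ⇑(δ i)) (↑F : Set A)}
      zero_mem' := ⟨∅, by simp, (radDiffGen (fun i => ⇑(δ i)) _).zero_mem⟩
      add_mem' := by
        rintro u v ⟨F1, hF1, hu⟩ ⟨F2, hF2, hv⟩
        refine ⟨F1 ∪ F2,
          by simp only [Finset.coe_union, Set.union_subset_iff]; exact ⟨hF1, hF2⟩, ?_⟩
        exact (radDiffGen (fun i => ⇑(δ i)) _).add_mem
          (rdg_mono (by simp only [Finset.coe_union]; exact Set.subset_union_left) hu)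
          (rdg_mono (by simp only [Finset.coe_union]; exact Set.subset_union_right) hv)
      smul_mem' := by
        rintro c u ⟨F1, hF1, hu⟩
        exact ⟨F1, hF1, (radDiffGen (fun i => ⇑(δ i)) _).smul_mem c hu⟩ }
  have hJ : radDiffGen (fun i => ⇑(δ i)) E ≤ J := by
    apply rdg_le
    · intro e he
      exact ⟨{e}, by simpa using he, rdg_subset _ (by simp)⟩
    · rintro r hr
      rw [Ideal.mem_radical_iff] at hr
      obtain ⟨n, hn⟩ := hr
      obtain ⟨F, hF, hFn⟩ := hn
      exact ⟨F, hF, rdg_isRadical _ (Ideal.mem_radical_iff.2 ⟨n, hFn⟩)⟩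
    · rintro i r ⟨F, hF, hFr⟩
      exact ⟨F, hF, rdg_isDiff _ i r hFr⟩
  exact hJ ha

end aux2

/-- For a Keigher ring `A`, a global section `f ∈ O(X)` with `f(p) ∈ p A_p` for all `p`
is nilpotent. -/
theorem stmt14 {A : Type*} [CommRing A] {k : ℕ} (δ : Fin k → Derivation ℤ A A)
    (hcomm : ∀ i j a, δ i (δ j a) = δ j (δ i a))
    (hK : IsKeigher (fun i => ⇑(δ i)))
    (f : ∀ p : DiffSpec (fun i => ⇑(δ i)), Localization.AtPrime p.1.asIdeal)
    (hf : RegularLoc f)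
    (h : ∀ p, f p ∈ IsLocalRing.maximalIdeal (Localization.AtPrime p.1.asIdeal)) :
    ∃ n : ℕ, 1 ≤ n ∧ ∀ p, f p ^ n = 0 := by
  classical
  -- Step 1: local data
  have step1 : ∀ p : DiffSpec (fun i => ⇑(δ i)), ∃ g a b : A,
      g ∉ p.1.asIdeal ∧
      ∀ q : DiffSpec (fun i => ⇑(δ i)), g ∉ q.1.asIdeal →
        b ∉ q.1.asIdeal ∧
        f q * algebraMap A (Localization.AtPrime q.1.asIdeal) b
          = algebraMap A (Localization.AtPrime q.1.asIdeal) a ∧ a ∈ q.1.asIdeal := by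
    intro p
    obtain ⟨U, hU, hpU, a, b, hb, hfa⟩ := hf p
    obtain ⟨V, hV, hVU⟩ := isOpen_induced_iff.1 hU
    have hpV : p.1 ∈ V := by rw [← hVU] at hpU; exact hpU
    obtain ⟨W, hW, hpW, hWV⟩ :=
      PrimeSpectrum.isTopologicalBasis_basic_opens.exists_subset_of_mem_open hpV hV
    obtain ⟨g, rfl⟩ := hW
    refine ⟨g, a, b, (PrimeSpectrum.mem_basicOpen g _).1 hpW, ?_⟩
    intro q hgq
    have hqU : q ∈ U := by
      rw [← hVU]; exact hWV ((PrimeSpectrum.mem_basicOpen g _).2 hgq)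
    refine ⟨hb q hqU, hfa q hqU, ?_⟩
    have h1 : f q * algebraMap A (Localization.AtPrime q.1.asIdeal) b
        ∈ IsLocalRing.maximalIdeal (Localization.AtPrime q.1.asIdeal) :=
      Ideal.mul_mem_right _ _ (h q)
    rw [hfa q hqU] at h1
    exact (IsLocalization.AtPrime.to_map_mem_maximal_iff
      (Localization.AtPrime q.1.asIdeal) q.1.asIdeal a).1 h1
  choose g a b hg hrest using step1
  -- Step 2: each a p * g p is nilpotent
  have nilp : ∀ p, ∃ n : ℕ, (a p * g p) ^ n = 0 := by
    intro p
    by_contra hcon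
    push_neg at hcon
    have hdbot : IsDiffIdeal (fun i => ⇑(δ i)) (⊥ : Ideal A) := by
      intro i x hx
      rw [Ideal.mem_bot] at hx ⊢
      rw [hx]; exact (δ i).map_zero
    have hdnil : IsDiffIdeal (fun i => ⇑(δ i)) (⊥ : Ideal A).radical := hK ⊥ hdbot
    have hx : ∀ n : ℕ, (a p * g p) ^ n ∉ (⊥ : Ideal A).radical := by
      intro n hn
      rw [Ideal.mem_radical_iff] at hn
      obtain ⟨m, hm⟩ := hn
      rw [← pow_mul, Ideal.mem_bot] at hm
      exact hcon _ hm
    obtain ⟨P, hP, hPdiff, _, hxP⟩ :=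
      exists_diffPrime δ (Ideal.radical_isRadical ⊥) hdnil hx
    set q : DiffSpec (fun i => ⇑(δ i)) := ⟨⟨P, hP⟩, hPdiff⟩
    apply hxP
    by_cases hgq : g p ∈ q.1.asIdeal
    · exact P.mul_mem_left _ hgq
    · exact P.mul_mem_right _ (hrest p q hgq).2.2
  choose nf hnf using nilp
  -- Step 3: 1 lies in the radical differential ideal generated by the g's
  have hone : (1 : A) ∈ radDiffGen (fun i => ⇑(δ i)) (Set.range g) := by
    by_contra h1
    obtain ⟨P, hP, hPdiff, hle, _⟩ :=
      exists_diffPrime δ (rdg_isRadical _) (rdg_isDiff _)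
        (x := (1 : A)) (fun n => by simpa using h1)
    exact hg ⟨⟨P, hP⟩, hPdiff⟩ (hle (rdg_subset _ ⟨_, rfl⟩))
  obtain ⟨F, hFsub, hF1⟩ := rdg_finitary δ hone
  choose σ hσ using fun y : {y // y ∈ F} => hFsub y.2
  set N : ℕ := F.attach.sup (fun y => nf (σ y)) + 1 with hN
  refine ⟨N, Nat.le_add_left 1 _, ?_⟩
  intro q
  -- find a g not in q
  have hex : ∃ y ∈ F, y ∉ q.1.asIdeal := by
    by_contra hall
    push_neg at hall
    have hsub : (↑F : Set A) ⊆ ↑q.1.asIdeal := fun y hy => hall y hy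
    have h1 : (1 : A) ∈ q.1.asIdeal :=
      rdg_le hsub q.1.isPrime.isRadical q.2 hF1
    exact q.1.isPrime.ne_top ((Ideal.eq_top_iff_one _).2 h1)
  obtain ⟨y, hyF, hyq⟩ := hex
  set p := σ ⟨y, hyF⟩ with hp
  have hgq : g p ∉ q.1.asIdeal := by rw [hσ ⟨y, hyF⟩]; exact hyq
  obtain ⟨hbq, heq, _⟩ := hrest p q hgq
  have hzero : (a p * g p) ^ N = 0 :=
    pow_eq_zero_of_le (Nat.le_succ_of_le (Finset.le_sup (Finset.mem_attach F ⟨y, hyF⟩)))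
      (hnf p)
  -- push to the localization
  have hmapzero : algebraMap A (Localization.AtPrime q.1.asIdeal) (a p ^ N) = 0 := by
    have h2 : algebraMap A (Localization.AtPrime q.1.asIdeal) (g p ^ N)
        * algebraMap A (Localization.AtPrime q.1.asIdeal) (a p ^ N) = 0 := by
      rw [← map_mul]
      have : g p ^ N * a p ^ N = (a p * g p) ^ N := by rw [mul_pow]; ring
      rw [this, hzero, map_zero]
    have hu : IsUnit (algebraMap A (Localization.AtPrime q.1.asIdeal) (g p ^ N)) :=
      IsLocalization.map_units (Localization.AtPrime q.1.asIdeal)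
        (⟨g p ^ N, Submonoid.pow_mem q.1.asIdeal.primeCompl hgq N⟩ : q.1.asIdeal.primeCompl)
    exact (IsUnit.mul_right_eq_zero hu).1 h2
  have h3 : algebraMap A (Localization.AtPrime q.1.asIdeal) (b p) ^ N * f q ^ N = 0 := by
    have := congrArg (· ^ N) heq
    simp only [mul_pow] at this
    rw [mul_comm, this, ← map_pow, hmapzero]
  have hub : IsUnit (algebraMap A (Localization.AtPrime q.1.asIdeal) (b p) ^ N) :=
    (IsLocalization.map_units (Localization.AtPrime q.1.asIdeal) (⟨b p, hbq⟩ : q.1.asIdeal.primeCompl)).pow N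
  exact (IsUnit.mul_right_eq_zero hub).1 h3
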